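/- Let p > 5, γ < 0, ω > 0, and let (α,β) satisfy α > 0, 2α−β ≥ 0 and 2α+β ≥ 0. Let (φ_n) be a sequence of nonzero H¹(ℝ) functions such that sup_n ‖φ_n‖_{L²} < ∞ and ‖∂ₓφ_n‖_{L²} → 0 as n → ∞. Then there exists N such that K^{α,β}_{ω,γ}(φ_n) > 0 for all n ≥ N. -/

import Mathlib

open MeasureTheory Real Filter Topology

/-- `φ : ℝ → ℂ` lies in `H¹(ℝ)`: `φ ∈ L²(ℝ)` together with a weak derivative
`dx ∈ L²(ℝ)` such that `φ x = φ 0 + ∫₀ˣ dx (t) dt` for all `x`. -/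
structure H1 where
  toFun : ℝ → ℂ
  dx : ℝ → ℂ
  memL2 : MemLp toFun 2 (volume : Measure ℝ)
  dx_memL2 : MemLp dx 2 (volume : Measure ℝ)
  eq_int : ∀ x : ℝ, toFun x = toFun 0 + ∫ t in (0:ℝ)..x, dx t

/-- `‖∂ₓφ‖²_{L²}` -/
noncomputable def gradSq (φ : H1) : ℝ := ∫ x : ℝ, ‖φ.dx x‖ ^ 2

/-- `‖φ‖²_{L²}` -/
noncomputable def massSq (φ : H1) : ℝ := ∫ x : ℝ, ‖φ.toFun x‖ ^ 2

/-- `‖φ‖^{p+1}_{L^{p+1}}` -/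
noncomputable def lpPow (p : ℝ) (φ : H1) : ℝ := ∫ x : ℝ, ‖φ.toFun x‖ ^ (p + 1)

/-- The action `S_{ω,μ}(φ) = (1/4)‖∂ₓφ‖²_{L²} − (μ/2)|φ(0)|² + (ω/2)‖φ‖²_{L²}
− (1/(p+1))‖φ‖^{p+1}_{L^{p+1}}`. -/
noncomputable def Sfun (p ω μ : ℝ) (φ : H1) : ℝ :=
  (1/4) * gradSq φ - (μ/2) * ‖φ.toFun 0‖ ^ 2 + (ω/2) * massSq φ - (1/(p+1)) * lpPow p φ

/-- The virial functional `P_μ(φ) = (1/2)‖∂ₓφ‖²_{L²} − (μ/2)|φ(0)|²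
− ((p−1)/(2(p+1)))‖φ‖^{p+1}_{L^{p+1}}`. -/
noncomputable def Pfun (p μ : ℝ) (φ : H1) : ℝ :=
  (1/2) * gradSq φ - (μ/2) * ‖φ.toFun 0‖ ^ 2 - ((p-1)/(2*(p+1))) * lpPow p φ

/-- The Nehari functional `I_{ω,γ}(φ) = (1/2)‖∂ₓφ‖²_{L²} − γ|φ(0)|² + ω‖φ‖²_{L²}
− ‖φ‖^{p+1}_{L^{p+1}}`. -/
noncomputable def Ifun (p ω γ : ℝ) (φ : H1) : ℝ :=
  (1/2) * gradSq φ - γ * ‖φ.toFun 0‖ ^ 2 + ω * massSq φ - lpPow p φ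

/-- `K^{α,β}_{ω,γ}`. -/
noncomputable def Kfun (p ω γ α β : ℝ) (φ : H1) : ℝ :=
  ((2*α-β)/4) * gradSq φ + (ω*(2*α+β)/2) * massSq φ - γ*α*‖φ.toFun 0‖ ^ 2
    - (((p+1)*α+β)/(p+1)) * lpPow p φ

/-- `J^{α,β}_{ω,γ}(φ) = S_{ω,γ}(φ) − K^{α,β}_{ω,γ}(φ)/μ̄` with `μ̄ = max(2α−β, 2α+β)`. -/
noncomputable def Jfun (p ω γ α β : ℝ) (φ : H1) : ℝ :=
  Sfun p ω γ φ - Kfun p ω γ α β φ / max (2*α-β) (2*α+β)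

/-- The mass `M(φ) = (1/2)‖φ‖²_{L²}`. -/
noncomputable def Mfun (φ : H1) : ℝ := (1/2) * massSq φ

/-- The energy `E_μ(φ) = (1/4)‖∂ₓφ‖²_{L²} − (μ/2)|φ(0)|² − (1/(p+1))‖φ‖^{p+1}_{L^{p+1}}`. -/
noncomputable def Efun (p μ : ℝ) (φ : H1) : ℝ :=
  (1/4) * gradSq φ - (μ/2) * ‖φ.toFun 0‖ ^ 2 - (1/(p+1)) * lpPow p φ

/-- `n_ω`: infimum of `S_{ω,γ}` over nonzero `H¹(ℝ)` functions with `P_γ = 0`. -/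
noncomputable def nOmega (p γ ω : ℝ) : ℝ :=
  sInf {s : ℝ | ∃ φ : H1, φ.toFun ≠ 0 ∧ Pfun p γ φ = 0 ∧ Sfun p ω γ φ = s}

/-- `r_ω`: infimum of `S_{ω,γ}` over nonzero even `H¹(ℝ)` functions with `P_γ = 0`. -/
noncomputable def rOmega (p γ ω : ℝ) : ℝ :=
  sInf {s : ℝ | ∃ φ : H1, φ.toFun ≠ 0 ∧ (∀ x, φ.toFun (-x) = φ.toFun x) ∧
    Pfun p γ φ = 0 ∧ Sfun p ω γ φ = s}

/-- `l_ω`: infimum of `S_{ω,0}` over nonzero `H¹(ℝ)` functions with `P_0 = 0`. -/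
noncomputable def lOmega (p ω : ℝ) : ℝ :=
  sInf {s : ℝ | ∃ φ : H1, φ.toFun ≠ 0 ∧ Pfun p 0 φ = 0 ∧ Sfun p ω 0 φ = s}

/-- The inverse hyperbolic tangent. -/
noncomputable def artanh (x : ℝ) : ℝ := (1/2) * Real.log ((1+x)/(1-x))

/-- The standing-wave profile
`Q_{ω,γ}(x) = ( ((p+1)ω/2)·sech²( ((p−1)√ω/√2)|x| + artanh(γ/√(2ω)) ) )^{1/(p−1)}`. -/
noncomputable def Qsol (p γ ω : ℝ) : ℝ → ℝ := fun x =>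
  (((p+1)*ω/2) *
    (1 / Real.cosh (((p-1)*Real.sqrt ω/Real.sqrt 2) * |x| + _root_.artanh (γ / Real.sqrt (2*ω)))) ^ 2)
  ^ (1/(p-1))

/-- The free ground state `Q_{1,0}(x) = ( ((p+1)/2)·sech²( ((p−1)/√2)x ) )^{1/(p−1)}`. -/
noncomputable def Qfree (p : ℝ) : ℝ → ℝ := fun x =>
  (((p+1)/2) * (1 / Real.cosh (((p-1)/Real.sqrt 2) * x)) ^ 2) ^ (1/(p-1))

/-- `‖φ‖²_𝓗 = (1/4)‖∂ₓφ‖²_{L²} + (ω/2)‖φ‖²_{L²} − (γ/2)|φ(0)|²`. -/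
noncomputable def HnormSq (ω γ : ℝ) (φ : H1) : ℝ :=
  (1/4) * gradSq φ + (ω/2) * massSq φ - (γ/2) * ‖φ.toFun 0‖ ^ 2

lemma H1.integrable_normSq (φ : H1) : Integrable (fun x => ‖φ.toFun x‖ ^ 2) volume :=
  φ.memL2.norm.integrable_sq

lemma H1.integrable_dx_normSq (φ : H1) : Integrable (fun x => ‖φ.dx x‖ ^ 2) volume :=
  φ.dx_memL2.norm.integrable_sq

lemma massSq_nonneg (φ : H1) : 0 ≤ massSq φ :=
  integral_nonneg fun x => by positivity

lemma gradSq_nonneg (φ : H1) : 0 ≤ gradSq φ :=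
  integral_nonneg fun x => by positivity

lemma H1.intOn (φ : H1) (a b : ℝ) : IntegrableOn φ.dx (Set.Ioc a b) volume := by
  haveI : IsFiniteMeasure (volume.restrict (Set.Ioc a b)) :=
    ⟨by rw [Measure.restrict_apply_univ]; exact measure_Ioc_lt_top⟩
  exact (φ.dx_memL2.restrict _).integrable (by norm_num)

lemma H1.intInt (φ : H1) (a b : ℝ) : IntervalIntegrable φ.dx volume a b :=
  ⟨φ.intOn a b, φ.intOn b a⟩

lemma H1.sub_eq (φ : H1) (a b : ℝ) :
    φ.toFun b - φ.toFun a = ∫ t in a..b, φ.dx t := by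
  rw [φ.eq_int a, φ.eq_int b, add_sub_add_left_eq_sub]
  exact intervalIntegral.integral_interval_sub_left (φ.intInt 0 b) (φ.intInt 0 a)

lemma H1.norm_sub_le (φ : H1) {a b : ℝ} (hab : a ≤ b) :
    ‖φ.toFun b - φ.toFun a‖ ≤ Real.sqrt (b - a) * Real.sqrt (gradSq φ) := by
  haveI : IsFiniteMeasure (volume.restrict (Set.Ioc a b)) :=
    ⟨by rw [Measure.restrict_apply_univ]; exact measure_Ioc_lt_top⟩
  rw [φ.sub_eq a b]
  have h1 : ‖∫ t in a..b, φ.dx t‖ ≤ ∫ t in Set.Ioc a b, ‖φ.dx t‖ := by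
    rw [← intervalIntegral.integral_of_le hab]
    exact intervalIntegral.norm_integral_le_integral_norm hab
  have hconj : Real.HolderConjugate 2 2 := Real.HolderConjugate.two_two
  have h2 : ∫ t in Set.Ioc a b, ‖φ.dx t‖ * 1 ≤
      (∫ t in Set.Ioc a b, ‖φ.dx t‖ ^ (2:ℝ)) ^ (1/2:ℝ) *
      (∫ t in Set.Ioc a b, (1:ℝ) ^ (2:ℝ)) ^ (1/2:ℝ) := by
    refine integral_mul_le_Lp_mul_Lq_of_nonneg hconj ?_ ?_ ?_ ?_
    · exact Filter.Eventually.of_forall fun x => norm_nonneg _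
    · exact Filter.Eventually.of_forall fun x => zero_le_one
    · simpa using (φ.dx_memL2.norm.restrict (Set.Ioc a b))
    · simpa using (memLp_const (μ := volume.restrict (Set.Ioc a b)) (1:ℝ))
  simp only [mul_one] at h2
  have h3 : ∫ t in Set.Ioc a b, ‖φ.dx t‖ ^ (2:ℝ) ≤ gradSq φ := by
    have he : ∀ t : ℝ, ‖φ.dx t‖ ^ (2:ℝ) = ‖φ.dx t‖ ^ 2 := fun t => by
      rw [show (2:ℝ) = ((2:ℕ):ℝ) by norm_num, Real.rpow_natCast]
    calc ∫ t in Set.Ioc a b, ‖φ.dx t‖ ^ (2:ℝ)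
        = ∫ t in Set.Ioc a b, ‖φ.dx t‖ ^ 2 := by
          exact integral_congr_ae (Filter.Eventually.of_forall fun t => he t)
      _ ≤ gradSq φ := setIntegral_le_integral φ.integrable_dx_normSq
            (Filter.Eventually.of_forall fun x => by positivity)
  have h4 : (∫ t in Set.Ioc a b, (1:ℝ) ^ (2:ℝ)) = b - a := by
    simp [Real.volume_Ioc, ENNReal.toReal_ofReal (by linarith : (0:ℝ) ≤ b - a), hab]
  have h5 : (∫ t in Set.Ioc a b, ‖φ.dx t‖ ^ (2:ℝ)) ^ (1/2:ℝ) ≤ Real.sqrt (gradSq φ) := by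
    rw [Real.sqrt_eq_rpow]
    refine Real.rpow_le_rpow ?_ h3 (by norm_num)
    exact integral_nonneg fun t => Real.rpow_nonneg (norm_nonneg _) _
  have h6 : (∫ t in Set.Ioc a b, (1:ℝ) ^ (2:ℝ)) ^ (1/2:ℝ) = Real.sqrt (b - a) := by
    rw [h4, Real.sqrt_eq_rpow]
  calc ‖∫ t in a..b, φ.dx t‖ ≤ ∫ t in Set.Ioc a b, ‖φ.dx t‖ := h1
    _ ≤ (∫ t in Set.Ioc a b, ‖φ.dx t‖ ^ (2:ℝ)) ^ (1/2:ℝ) *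
        (∫ t in Set.Ioc a b, (1:ℝ) ^ (2:ℝ)) ^ (1/2:ℝ) := h2
    _ ≤ Real.sqrt (gradSq φ) * Real.sqrt (b - a) := by
        rw [h6]
        exact mul_le_mul_of_nonneg_right h5 (Real.sqrt_nonneg _)
    _ = Real.sqrt (b - a) * Real.sqrt (gradSq φ) := mul_comm _ _

lemma H1.key (φ : H1) (x δ : ℝ) (hδ : 0 < δ)
    (hc : 0 ≤ ‖φ.toFun x‖ - Real.sqrt δ * Real.sqrt (gradSq φ)) :
    δ * (‖φ.toFun x‖ - Real.sqrt δ * Real.sqrt (gradSq φ)) ^ 2 ≤ massSq φ := by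
  set c := ‖φ.toFun x‖ - Real.sqrt δ * Real.sqrt (gradSq φ) with hcdef
  have hpt : ∀ t ∈ Set.Ioc x (x + δ), c ^ 2 ≤ ‖φ.toFun t‖ ^ 2 := by
    intro t ht
    have h1 : ‖φ.toFun t - φ.toFun x‖ ≤ Real.sqrt (t - x) * Real.sqrt (gradSq φ) :=
      φ.norm_sub_le (le_of_lt ht.1)
    have h2 : Real.sqrt (t - x) ≤ Real.sqrt δ := Real.sqrt_le_sqrt (by linarith [ht.2])
    have h3 : ‖φ.toFun x‖ - ‖φ.toFun t‖ ≤ ‖φ.toFun t - φ.toFun x‖ := by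
      have habs := abs_norm_sub_norm_le (φ.toFun x) (φ.toFun t)
      rw [norm_sub_rev] at habs
      exact le_trans (le_abs_self _) habs
    have hGs : 0 ≤ Real.sqrt (gradSq φ) := Real.sqrt_nonneg _
    have hle : c ≤ ‖φ.toFun t‖ := by
      have := mul_le_mul_of_nonneg_right h2 hGs
      simp only [hcdef]
      linarith
    exact pow_le_pow_left₀ hc hle 2
  have h := setIntegral_ge_of_const_le (c := c ^ 2) measurableSet_Ioc
      measure_Ioc_lt_top.ne hpt (φ.integrable_normSq.integrableOn)
  have hv : (volume (Set.Ioc x (x + δ))).toReal = δ := by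
    rw [Real.volume_Ioc]
    simp [ENNReal.toReal_ofReal hδ.le]
  have h2 : ∫ t in Set.Ioc x (x + δ), ‖φ.toFun t‖ ^ 2 ≤ massSq φ :=
    setIntegral_le_integral φ.integrable_normSq
      (Filter.Eventually.of_forall fun t => by positivity)
  rw [measureReal_def, hv, smul_eq_mul] at h
  linarith [h, h2]

lemma H1.pow_four_le (φ : H1) (x : ℝ) :
    ‖φ.toFun x‖ ^ 4 ≤ 16 * massSq φ * gradSq φ := by
  set a := ‖φ.toFun x‖ with hadef
  have ha0 : (0:ℝ) ≤ a := norm_nonneg _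
  have hM : 0 ≤ massSq φ := massSq_nonneg φ
  have hG : 0 ≤ gradSq φ := gradSq_nonneg φ
  rcases eq_or_lt_of_le ha0 with h | h
  · rw [← h]
    have := mul_nonneg (mul_nonneg (by norm_num : (0:ℝ) ≤ 16) hM) hG
    simpa using this
  rcases eq_or_lt_of_le hG with hG0 | hG0
  · exfalso
    set δ := (massSq φ + 1) / a ^ 2 with hδdef
    have hδ : 0 < δ := by positivity
    have hc : 0 ≤ a - Real.sqrt δ * Real.sqrt (gradSq φ) := by
      rw [← hG0, Real.sqrt_zero, mul_zero]; linarith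
    have hk := φ.key x δ hδ hc
    rw [← hG0, Real.sqrt_zero, mul_zero, sub_zero, hδdef] at hk
    have : (massSq φ + 1) / a ^ 2 * a ^ 2 = massSq φ + 1 := by field_simp
    rw [this] at hk
    linarith
  · set δ := a ^ 2 / (4 * gradSq φ) with hδdef
    have hδ : 0 < δ := by positivity
    have hs : Real.sqrt δ * Real.sqrt (gradSq φ) = a / 2 := by
      rw [← Real.sqrt_mul hδ.le]
      have he : δ * gradSq φ = (a / 2) ^ 2 := by
        rw [hδdef]; field_simp; ring
      rw [he, Real.sqrt_sq (by positivity)]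
    have hc : 0 ≤ a - Real.sqrt δ * Real.sqrt (gradSq φ) := by rw [hs]; linarith
    have hk := φ.key x δ hδ hc
    rw [hs, hδdef] at hk
    have he2 : a ^ 2 / (4 * gradSq φ) * (a - a / 2) ^ 2 = a ^ 4 / (16 * gradSq φ) := by
      field_simp; ring
    rw [he2, div_le_iff₀ (by positivity)] at hk
    nlinarith [hk]



lemma lpPow_le (p C : ℝ) (hp : 5 < p) (φ : H1) (hM0 : 0 ≤ C) (hC : massSq φ ≤ C) :
    lpPow p φ ≤ (16 * C * gradSq φ) ^ ((p - 1) / 4 : ℝ) * massSq φ := by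
  set D := (16 * C * gradSq φ) ^ ((p - 1) / 4 : ℝ) with hD
  have hG : 0 ≤ gradSq φ := gradSq_nonneg φ
  have hbase : 0 ≤ 16 * C * gradSq φ := by positivity
  have hD0 : 0 ≤ D := Real.rpow_nonneg hbase _
  have hpt : ∀ x, ‖φ.toFun x‖ ^ (p + 1 : ℝ) ≤ D * ‖φ.toFun x‖ ^ 2 := by
    intro x
    set b := ‖φ.toFun x‖ with hb
    have hb0 : (0:ℝ) ≤ b := norm_nonneg _
    rcases eq_or_lt_of_le hb0 with h | h
    · rw [← h, Real.zero_rpow (by linarith : (p:ℝ) + 1 ≠ 0)]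
      positivity
    · have h4 : b ^ (4:ℕ) ≤ 16 * C * gradSq φ :=
        le_trans (φ.pow_four_le x) (by nlinarith [massSq_nonneg φ])
      have h5 : b ^ ((p - 1) : ℝ) ≤ D := by
        have he : b ^ ((p - 1) : ℝ) = ((b ^ (4:ℕ) : ℝ)) ^ ((p - 1) / 4 : ℝ) := by
          rw [← Real.rpow_natCast b 4, ← Real.rpow_mul hb0]
          congr 1
          ring
        rw [he, hD]
        exact Real.rpow_le_rpow (by positivity) h4 (by linarith)
      have h6 : b ^ ((p + 1) : ℝ) = b ^ ((p - 1) : ℝ) * b ^ 2 := by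
        rw [← Real.rpow_natCast b 2, ← Real.rpow_add h]
        congr 1
        ring
      rw [h6]
      exact mul_le_mul_of_nonneg_right h5 (by positivity)
  have hint : Integrable (fun x => D * ‖φ.toFun x‖ ^ 2) volume :=
    φ.integrable_normSq.const_mul D
  have := integral_mono_of_nonneg
    (Filter.Eventually.of_forall fun x => Real.rpow_nonneg (norm_nonneg _) _)
    hint (Filter.Eventually.of_forall hpt)
  unfold lpPow massSq
  rwa [integral_const_mul] at this


/-- If `(φ_n)` are nonzero `H¹` functions, bounded in `L²`, with
`‖∂ₓφ_n‖_{L²} → 0`, then `K^{α,β}_{ω,γ}(φ_n) > 0` for all large `n`. -/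
theorem K_pos_near_origin (p γ ω α β : ℝ) (hp : 5 < p) (hγ : γ < 0) (hω : 0 < ω)
    (hα : 0 < α) (hβ1 : 0 ≤ 2*α - β) (hβ2 : 0 ≤ 2*α + β)
    (φ : ℕ → H1) (hne : ∀ n, (φ n).toFun ≠ 0)
    (hbd : ∃ C : ℝ, ∀ n, massSq (φ n) ≤ C)
    (hgrad : Tendsto (fun n => gradSq (φ n)) atTop (𝓝 0)) :
    ∃ N : ℕ, ∀ n ≥ N, 0 < Kfun p ω γ α β (φ n) := by
  obtain ⟨C, hC⟩ := hbd
  have hMpos : ∀ n, 0 < massSq (φ n) := by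
    intro n
    rcases (massSq_nonneg (φ n)).lt_or_eq with h | h
    · exact h
    · exfalso
      apply hne n
      funext x
      have h4 := (φ n).pow_four_le x
      rw [← h] at h4
      have h4' : ‖(φ n).toFun x‖ ^ 4 ≤ 0 := by linarith [h4]
      have : ‖(φ n).toFun x‖ ^ 4 = 0 := le_antisymm h4' (by positivity)
      have : ‖(φ n).toFun x‖ = 0 :=
        pow_eq_zero_iff (by norm_num : (4:ℕ) ≠ 0) |>.mp this
      simpa using this
  have hGpos : ∀ n, 0 < gradSq (φ n) := by
    intro n
    rcases (gradSq_nonneg (φ n)).lt_or_eq with h | h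
    · exact h
    · exfalso
      apply hne n
      funext x
      have h4 := (φ n).pow_four_le x
      rw [← h] at h4
      have h4' : ‖(φ n).toFun x‖ ^ 4 ≤ 0 := by linarith [h4]
      have : ‖(φ n).toFun x‖ ^ 4 = 0 := le_antisymm h4' (by positivity)
      have : ‖(φ n).toFun x‖ = 0 :=
        pow_eq_zero_iff (by norm_num : (4:ℕ) ≠ 0) |>.mp this
      simpa using this
  have hC0 : 0 ≤ C := le_trans (hMpos 0).le (hC 0)
  set c := ((p + 1) * α + β) / (p + 1) with hc_def
  have hc : 0 < c := by
    apply div_pos _ (by linarith)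
    nlinarith
  set D : ℕ → ℝ := fun n => (16 * C * gradSq (φ n)) ^ ((p - 1) / 4 : ℝ) with hD_def
  have hD0 : ∀ n, 0 ≤ D n := fun n =>
    Real.rpow_nonneg (mul_nonneg (by linarith) (gradSq_nonneg (φ n))) _
  have hlp : ∀ n, lpPow p (φ n) ≤ D n * massSq (φ n) := fun n =>
    lpPow_le p C hp (φ n) hC0 (hC n)
  have hDto : Tendsto D atTop (𝓝 0) := by
    have h1 : Tendsto (fun n => 16 * C * gradSq (φ n)) atTop (𝓝 (16 * C * 0)) :=
      hgrad.const_mul _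
    rw [mul_zero] at h1
    have h2 : ContinuousAt (fun y : ℝ => y ^ ((p - 1) / 4 : ℝ)) 0 :=
      Real.continuousAt_rpow_const 0 _ (Or.inr (by linarith))
    have h3 := h2.tendsto.comp h1
    have h0 : (0:ℝ) ^ ((p - 1) / 4 : ℝ) = 0 :=
      Real.zero_rpow (ne_of_gt (by linarith : (0:ℝ) < (p - 1) / 4))
    rw [h0] at h3
    exact h3
  have hK : ∀ n, (2 * α - β) / 4 * gradSq (φ n) + ω * (2 * α + β) / 2 * massSq (φ n)
      - c * (D n * massSq (φ n)) ≤ Kfun p ω γ α β (φ n) := by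
    intro n
    have hγα : γ * α * ‖(φ n).toFun 0‖ ^ 2 ≤ 0 :=
      mul_nonpos_of_nonpos_of_nonneg (by nlinarith) (by positivity)
    have hlpm : c * lpPow p (φ n) ≤ c * (D n * massSq (φ n)) :=
      mul_le_mul_of_nonneg_left (hlp n) hc.le
    unfold Kfun
    rw [← hc_def]
    linarith
  rcases hβ2.lt_or_eq with hpos | heq
  · -- 0 < 2α + β
    have hhalf : 0 < ω * (2 * α + β) / 2 := by positivity
    have hev : ∀ᶠ n in atTop, c * D n < ω * (2 * α + β) / 2 := by
      have ht : Tendsto (fun n => c * D n) atTop (𝓝 0) := by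
        simpa using hDto.const_mul c
      exact ht.eventually_lt_const hhalf
    obtain ⟨N, hN⟩ := eventually_atTop.mp hev
    refine ⟨N, fun n hn => ?_⟩
    have h1 := hK n
    have h2 : 0 < (ω * (2 * α + β) / 2 - c * D n) * massSq (φ n) :=
      mul_pos (by linarith [hN n hn]) (hMpos n)
    have h3 : 0 ≤ (2 * α - β) / 4 * gradSq (φ n) :=
      mul_nonneg (by linarith) (gradSq_nonneg _)
    nlinarith [h1, h2, h3]
  · -- 0 = 2α + β
    have hβ : β = -(2 * α) := by linarith
    have h16C : (0:ℝ) ≤ 16 * C := by positivity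
    set E := c * (16 * C) ^ ((p - 1) / 4 : ℝ) * C with hE_def
    have hE0 : 0 ≤ E := by positivity
    have hbound : ∀ n, c * (D n * massSq (φ n)) ≤
        E * (gradSq (φ n) * (gradSq (φ n)) ^ ((p - 5) / 4 : ℝ)) := by
      intro n
      have hsplit : D n = (16 * C) ^ ((p - 1) / 4 : ℝ) * (gradSq (φ n)) ^ ((p - 1) / 4 : ℝ) := by
        rw [hD_def]
        exact Real.mul_rpow h16C (gradSq_nonneg _)
      have hGsplit : (gradSq (φ n)) ^ ((p - 1) / 4 : ℝ)
          = gradSq (φ n) * (gradSq (φ n)) ^ ((p - 5) / 4 : ℝ) := by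
        rw [show ((p - 1) / 4 : ℝ) = 1 + (p - 5) / 4 by ring,
          Real.rpow_add (hGpos n), Real.rpow_one]
      rw [hsplit, hGsplit, hE_def]
      have ht0 : 0 ≤ (gradSq (φ n)) ^ ((p - 5) / 4 : ℝ) := Real.rpow_nonneg (gradSq_nonneg _) _
      have hK1 : 0 ≤ (16 * C) ^ ((p - 1) / 4 : ℝ) := Real.rpow_nonneg h16C _
      have hGn := (hGpos n).le
      nlinarith [mul_le_mul_of_nonneg_left (hC n)
        (by positivity : 0 ≤ c * ((16 * C) ^ ((p - 1) / 4 : ℝ) * (gradSq (φ n) * (gradSq (φ n)) ^ ((p - 5) / 4 : ℝ))))]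
    have hev : ∀ᶠ n in atTop, E * (gradSq (φ n)) ^ ((p - 5) / 4 : ℝ) < α := by
      have h1 : Tendsto (fun n => (gradSq (φ n)) ^ ((p - 5) / 4 : ℝ)) atTop (𝓝 0) := by
        have h2 : ContinuousAt (fun y : ℝ => y ^ ((p - 5) / 4 : ℝ)) 0 :=
          Real.continuousAt_rpow_const 0 _ (Or.inr (by linarith))
        have h3 := h2.tendsto.comp hgrad
        have h0 : (0:ℝ) ^ ((p - 5) / 4 : ℝ) = 0 :=
          Real.zero_rpow (ne_of_gt (by linarith : (0:ℝ) < (p - 5) / 4))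
        rw [h0] at h3
        exact h3
      have ht : Tendsto (fun n => E * (gradSq (φ n)) ^ ((p - 5) / 4 : ℝ)) atTop (𝓝 0) := by
        simpa using h1.const_mul E
      exact ht.eventually_lt_const hα
    obtain ⟨N, hN⟩ := eventually_atTop.mp hev
    refine ⟨N, fun n hn => ?_⟩
    have h1 := hK n
    have h2 := hbound n
    have h3 : 0 < (α - E * (gradSq (φ n)) ^ ((p - 5) / 4 : ℝ)) * gradSq (φ n) :=
      mul_pos (by linarith [hN n hn]) (hGpos n)
    have h4 : (2 * α - β) / 4 = α := by rw [hβ]; ring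
    rw [← heq] at h1
    rw [h4] at h1
    nlinarith [h1, h2, h3]
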